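/- Let S ⊆ ℤ^n be a finite nonempty set, let P = conv(S), and let d be the dimension of the affine hull of P. If p is a polynomial with rational coefficients such that p(k) = #(ℤ^n ∩ k·P) for all positive integers k, then p has degree exactly d. -/

import Mathlib

open scoped Pointwise

open Polynomial Filter Module

/-- If a rational polynomial is nonnegative at all positive integers, it is zero or has
nonnegative leading coefficient. -/
lemma aux_lead_nonneg (q : ℚ[X]) (h : ∀ k : ℕ, 1 ≤ k → 0 ≤ q.eval (k : ℚ)) :
    q = 0 ∨ 0 ≤ q.leadingCoeff := by
  by_contra hc
  push_neg at hc
  obtain ⟨hq0, hlc⟩ := hc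
  rcases le_or_gt q.degree 0 with hdeg | hdeg
  · have : q = C (q.coeff 0) := Polynomial.eq_C_of_degree_le_zero hdeg
    have h1 := h 1 le_rfl
    rw [this] at h1 hlc
    simp at h1
    simp [Polynomial.leadingCoeff] at hlc
    linarith
  · have ht := q.tendsto_atBot_of_leadingCoeff_nonpos hdeg hlc.le
    have : ∀ᶠ x : ℚ in atTop, q.eval x < 0 := ht.eventually (eventually_lt_atBot 0)
    obtain ⟨a, ha⟩ := this.exists_forall_of_atTop
    obtain ⟨k, hk⟩ := exists_nat_ge a
    have h1 := ha ((k + 1 : ℕ) : ℚ) (by push_cast; linarith)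
    have h2 := h (k + 1) (by omega)
    linarith

/-- A rational polynomial squeezed between two positive multiples of `X ^ d` at positive
integers has degree `d`. -/
lemma aux_degree_eq (p : ℚ[X]) (d : ℕ) (c C : ℚ) (hc : 0 < c) (hC : 0 < C)
    (hlow : ∀ k : ℕ, 1 ≤ k → c * (k : ℚ) ^ d ≤ p.eval (k : ℚ))
    (hup : ∀ k : ℕ, 1 ≤ k → p.eval (k : ℚ) ≤ C * (k : ℚ) ^ d) :
    p.natDegree = d := by
  have hp0 : p ≠ 0 := by
    intro h
    have := hlow 1 le_rfl
    simp [h] at this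
    linarith
  have hplead : 0 < p.leadingCoeff := by
    rcases aux_lead_nonneg p (fun k hk => le_trans (by positivity) (hlow k hk)) with h | h
    · exact absurd h hp0
    · exact h.lt_of_ne (fun h0 => hp0 (leadingCoeff_eq_zero.mp h0.symm))
  have hle : p.natDegree ≤ d := by
    by_contra hgt
    push_neg at hgt
    set q : ℚ[X] := Polynomial.C C * X ^ d - p with hqdef
    have hdegCX : (Polynomial.C C * X ^ d : ℚ[X]).degree = d := by
      rw [degree_C_mul_X_pow _ hC.ne']
    have hdeglt : (Polynomial.C C * X ^ d : ℚ[X]).degree < p.degree := by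
      rw [hdegCX, Polynomial.degree_eq_natDegree hp0]
      exact_mod_cast hgt
    have hq0 : q ≠ 0 := by
      intro h
      have hpe : Polynomial.C C * X ^ d = p := sub_eq_zero.mp h
      rw [← hpe, natDegree_C_mul_X_pow _ _ hC.ne'] at hgt
      omega
    have hqlead : q.leadingCoeff = -p.leadingCoeff := by
      rw [hqdef, sub_eq_add_neg, Polynomial.leadingCoeff_add_of_degree_lt]
      · simp
      · simpa using hdeglt
    rcases aux_lead_nonneg q (fun k hk => by
        have := hup k hk
        simp only [hqdef, Polynomial.eval_sub, Polynomial.eval_mul, Polynomial.eval_C,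
          Polynomial.eval_pow, Polynomial.eval_X]
        linarith) with h | h
    · exact hq0 h
    · rw [hqlead] at h; linarith
  have hge : d ≤ p.natDegree := by
    by_contra hgt
    push_neg at hgt
    set q : ℚ[X] := p - Polynomial.C c * X ^ d with hqdef
    have hdeglt : p.degree < (-(Polynomial.C c * X ^ d) : ℚ[X]).degree := by
      rw [Polynomial.degree_neg, degree_C_mul_X_pow _ hc.ne']
      calc p.degree ≤ (p.natDegree : WithBot ℕ) := Polynomial.degree_le_natDegree
        _ < d := by exact_mod_cast hgt
    have hq0 : q ≠ 0 := by
      intro h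
      have hpe : p = Polynomial.C c * X ^ d := sub_eq_zero.mp h
      rw [hpe, natDegree_C_mul_X_pow _ _ hc.ne'] at hgt
      omega
    have hqlead : q.leadingCoeff = -c := by
      rw [hqdef, sub_eq_add_neg, Polynomial.leadingCoeff_add_of_degree_lt hdeglt]
      simp
    rcases aux_lead_nonneg q (fun k hk => by
        have := hlow k hk
        simp only [hqdef, Polynomial.eval_sub, Polynomial.eval_mul, Polynomial.eval_C,
          Polynomial.eval_pow, Polynomial.eval_X]
        linarith) with h | h
    · exact hq0 h
    · rw [hqlead] at h; linarith
  omega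

/-- For a subspace `W` of `ℝⁿ` there is a set `T` of at most `finrank W` coordinates such that
any element of `W` vanishing on `T` is zero. -/
lemma aux_exists_coords (n : ℕ) (W : Submodule ℝ (Fin n → ℝ)) :
    ∃ T : Finset (Fin n), T.card ≤ Module.finrank ℝ W ∧
      ∀ w ∈ W, (∀ i ∈ T, w i = 0) → w = 0 := by
  classical
  set φ : Fin n → Module.Dual ℝ W := fun i => (LinearMap.proj i).comp W.subtype with hφ
  obtain ⟨b, hbsub, hbspan, hbind⟩ := exists_linearIndependent ℝ (Set.range φ)
  have hbfin : b.Finite := hbind.setFinite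
  have hch : ∀ f ∈ b, ∃ i : Fin n, φ i = f := fun f hf => hbsub hf
  choose idx hidx using hch
  refine ⟨hbfin.toFinset.attach.image (fun f => idx f.1 (hbfin.mem_toFinset.mp f.2)), ?_, ?_⟩
  · haveI := hbfin.fintype
    calc (hbfin.toFinset.attach.image _).card ≤ hbfin.toFinset.attach.card :=
        Finset.card_image_le
      _ = hbfin.toFinset.card := Finset.card_attach
      _ = Fintype.card b := Set.Finite.card_toFinset _
      _ ≤ Module.finrank ℝ (Module.Dual ℝ W) := hbind.fintype_card_le_finrank
      _ = Module.finrank ℝ W := Subspace.dual_finrank_eq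
  · intro w hw hzero
    have hWzero : ∀ f ∈ b, f ⟨w, hw⟩ = 0 := by
      intro f hf
      have : f = φ (idx f hf) := (hidx f hf).symm
      rw [this]
      exact hzero _ (Finset.mem_image.mpr ⟨⟨f, hbfin.mem_toFinset.mpr hf⟩,
        Finset.mem_attach _ _, rfl⟩)
    have hall : ∀ f ∈ Submodule.span ℝ b, f ⟨w, hw⟩ = 0 := by
      intro f hf
      induction hf using Submodule.span_induction with
      | mem f hf => exact hWzero f hf
      | zero => simp
      | add f g _ _ hf hg => simp [LinearMap.add_apply, hf, hg]
      | smul a f _ hf => simp [LinearMap.smul_apply, hf]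
    funext i
    exact hall (φ i) (hbspan ▸ Submodule.subset_span ⟨i, rfl⟩)

/-- The Ehrhart polynomial of an integral polytope has degree equal to the dimension of the
affine hull of the polytope. -/
theorem ehrhart_polynomial_degree_eq_dim
    (n : ℕ) (S : Finset (Fin n → ℤ)) (hS : S.Nonempty)
    (P : Set (Fin n → ℝ))
    (hP : P = convexHull ℝ ((fun y : Fin n → ℤ => fun i => (y i : ℝ)) '' ↑S))
    (d : ℕ) (hd : d = Module.finrank ℝ (affineSpan ℝ P).direction)
    (p : Polynomial ℚ)
    (hp : ∀ k : ℕ, 0 < k →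
      p.eval (k : ℚ) =
        (Set.ncard {x : Fin n → ℤ | (fun i => (x i : ℝ)) ∈ (k : ℝ) • P} : ℚ)) :
    p.natDegree = d := by
  classical
  obtain ⟨v0, hv0S⟩ := hS
  have hv0P : (fun i => ((v0 i : ℤ) : ℝ)) ∈ P :=
    hP ▸ subset_convexHull ℝ _ ⟨v0, hv0S, rfl⟩
  have hv0img : (fun i => ((v0 i : ℤ) : ℝ)) ∈ ((fun y : Fin n → ℤ => fun i => (y i : ℝ)) '' ↑S) :=
    ⟨v0, hv0S, rfl⟩
  -- boundedness of P
  have hfin : ((fun y : Fin n → ℤ => fun i => (y i : ℝ)) '' ↑S).Finite := S.finite_toSet.image _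
  have hcomp : IsCompact P := hP ▸ hfin.isCompact_convexHull ℝ
  obtain ⟨R, hR⟩ := isBounded_iff_forall_norm_le.mp hcomp.isBounded
  obtain ⟨R0, hR0⟩ : ∃ R0 : ℕ, ∀ y ∈ P, ∀ i, |y i| ≤ (R0 : ℝ) := by
    refine ⟨⌈R⌉₊ + 1, fun y hy i => ?_⟩
    calc |y i| = ‖y i‖ := (Real.norm_eq_abs _).symm
      _ ≤ ‖y‖ := norm_le_pi_norm y i
      _ ≤ R := hR y hy
      _ ≤ ((⌈R⌉₊ + 1 : ℕ) : ℝ) := by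
          rcases le_or_gt R 0 with h | h
          · exact h.trans (by positivity)
          · push_cast; exact (Nat.le_ceil R).trans (by linarith)
  -- coordinate bound for lattice points of k • P
  have hbox : ∀ k : ℕ, 0 < k → ∀ x : Fin n → ℤ,
      (fun i => ((x i : ℤ) : ℝ)) ∈ (k : ℝ) • P →
      ∀ i, x i ∈ Finset.Icc (-((k * R0 : ℕ) : ℤ)) ((k * R0 : ℕ) : ℤ) := by
    intro k hk x hx i
    obtain ⟨y, hy, hxy⟩ := hx
    have h1 : ((x i : ℤ) : ℝ) = (k : ℝ) * y i := by
      have := congrFun hxy i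
      simpa using this.symm
    have h2 : |((x i : ℤ) : ℝ)| ≤ ((k * R0 : ℕ) : ℝ) := by
      rw [h1, abs_mul, abs_of_nonneg (by positivity : (0:ℝ) ≤ (k:ℝ))]
      push_cast
      exact mul_le_mul_of_nonneg_left (hR0 y hy i) (by positivity)
    rw [Finset.mem_Icc, ← abs_le]
    exact_mod_cast h2
  -- finiteness of the set of lattice points
  have hAfin : ∀ k : ℕ, 0 < k →
      {x : Fin n → ℤ | (fun i => (x i : ℝ)) ∈ (k : ℝ) • P}.Finite := by
    intro k hk
    apply Set.Finite.subset (Set.Finite.pi (fun i : Fin n =>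
      Set.finite_Icc (-((k * R0 : ℕ) : ℤ)) ((k * R0 : ℕ) : ℤ)))
    intro x hx
    rw [Set.mem_pi]
    intro i _
    simpa [Set.mem_Icc, ← Finset.mem_Icc] using hbox k hk x hx i
  -- upper bound via coordinate selection
  obtain ⟨T, hTcard, hT⟩ := aux_exists_coords n (affineSpan ℝ P).direction
  rw [← hd] at hTcard
  have hdiffW : ∀ k : ℕ, 0 < k → ∀ x : Fin n → ℤ,
      (fun i => ((x i : ℤ) : ℝ)) ∈ (k : ℝ) • P →
      ((fun i => ((x i : ℤ) : ℝ)) - (k : ℝ) • (fun i => ((v0 i : ℤ) : ℝ))) ∈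
        (affineSpan ℝ P).direction := by
    intro k hk x hx
    obtain ⟨y, hy, hxy⟩ := hx
    have h1 : y -ᵥ (fun i => ((v0 i : ℤ) : ℝ)) ∈ (affineSpan ℝ P).direction :=
      AffineSubspace.vsub_mem_direction (mem_affineSpan ℝ hy) (mem_affineSpan ℝ hv0P)
    have h2 := Submodule.smul_mem _ (k : ℝ) h1
    convert h2 using 1
    rw [← hxy]
    simp [smul_sub]
  have hup : ∀ k : ℕ, 1 ≤ k →
      {x : Fin n → ℤ | (fun i => (x i : ℝ)) ∈ (k : ℝ) • P}.ncard ≤ ((2 * R0 + 1) * k) ^ d := by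
    intro k hk
    have hk0 : 0 < k := hk
    have hIcc : (Finset.Icc (-((k * R0 : ℕ) : ℤ)) ((k * R0 : ℕ) : ℤ)).card = 2 * (k * R0) + 1 := by
      rw [Int.card_Icc]
      generalize (k * R0 : ℕ) = B
      omega
    have h2 : 2 * (k * R0) + 1 ≤ (2 * R0 + 1) * k := by
      have h3 : (2 * R0 + 1) * k = 2 * (k * R0) + k := by ring
      rw [h3]
      exact Nat.add_le_add_left hk _
    set t : Finset ({ i // i ∈ T } → ℤ) :=
      Fintype.piFinset (fun _ => Finset.Icc (-((k * R0 : ℕ) : ℤ)) ((k * R0 : ℕ) : ℤ)) with htdef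
    have hcount : {x : Fin n → ℤ | (fun i => (x i : ℝ)) ∈ (k : ℝ) • P}.ncard ≤
        (↑t : Set ({ i // i ∈ T } → ℤ)).ncard := by
      apply Set.ncard_le_ncard_of_injOn (fun x => fun i : {i // i ∈ T} => x i.1)
      · intro x hx
        simp only [Finset.coe_sort_coe, Set.mem_setOf_eq] at hx ⊢
        rw [htdef, Finset.mem_coe, Fintype.mem_piFinset]
        intro i
        exact hbox k hk0 x hx i.1
      · intro x hx x' hx' hxx'
        simp only [Set.mem_setOf_eq] at hx hx'
        have hker : ((fun i => ((x i : ℤ) : ℝ)) - (k : ℝ) • (fun i => ((v0 i : ℤ) : ℝ)))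
            - ((fun i => ((x' i : ℤ) : ℝ)) - (k : ℝ) • (fun i => ((v0 i : ℤ) : ℝ)))
            ∈ (affineSpan ℝ P).direction :=
          Submodule.sub_mem _ (hdiffW k hk0 x hx) (hdiffW k hk0 x' hx')
        have hz : ∀ i ∈ T, (((fun i => ((x i : ℤ) : ℝ)) - (k : ℝ) • (fun i => ((v0 i : ℤ) : ℝ)))
            - ((fun i => ((x' i : ℤ) : ℝ)) - (k : ℝ) • (fun i => ((v0 i : ℤ) : ℝ)))) i = 0 := by
          intro i hi
          have : x i = x' i := congrFun hxx' ⟨i, hi⟩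
          simp [this]
        have := hT _ hker hz
        funext i
        have h0 := congrFun this i
        simp only [Pi.sub_apply, Pi.smul_apply, smul_eq_mul, Pi.zero_apply] at h0
        have : ((x i : ℤ) : ℝ) = ((x' i : ℤ) : ℝ) := by linarith
        exact_mod_cast this
    have hcard : (↑t : Set ({ i // i ∈ T } → ℤ)).ncard = (2 * (k * R0) + 1) ^ T.card := by
      rw [Set.ncard_coe_finset, htdef, Fintype.card_piFinset]
      rw [Finset.prod_const, Finset.card_univ, Fintype.card_coe, hIcc]
    calc {x : Fin n → ℤ | (fun i => (x i : ℝ)) ∈ (k : ℝ) • P}.ncard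
        ≤ (2 * (k * R0) + 1) ^ T.card := hcard ▸ hcount
      _ ≤ ((2 * R0 + 1) * k) ^ T.card := Nat.pow_le_pow_left h2 _
      _ ≤ ((2 * R0 + 1) * k) ^ d := Nat.pow_le_pow_right (by positivity) hTcard
  -- lower bound : lattice points from a basis of the direction
  have hWspan : (affineSpan ℝ P).direction =
      Submodule.span ℝ ((· -ᵥ (fun i => ((v0 i : ℤ) : ℝ))) ''
        ((fun y : Fin n → ℤ => fun i => (y i : ℝ)) '' ↑S)) := by
    rw [hP, affineSpan_convexHull, direction_affineSpan,
      vectorSpan_eq_span_vsub_set_right ℝ hv0img]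
  obtain ⟨b, hbsub, hbspan, hbind⟩ := exists_linearIndependent ℝ
    ((· -ᵥ (fun i => ((v0 i : ℤ) : ℝ))) '' ((fun y : Fin n → ℤ => fun i => (y i : ℝ)) '' ↑S))
  have hbfin : b.Finite := hbind.setFinite
  haveI : Fintype b := hbfin.fintype
  have hbcard : Fintype.card b = d := by
    have h1 : Module.finrank ℝ (Submodule.span ℝ b) = b.toFinset.card :=
      finrank_span_set_eq_card hbind
    rw [Set.toFinset_card] at h1
    rw [← h1, hbspan, hd, hWspan]
  have hsel : ∀ u : b, ∃ s : Fin n → ℤ, s ∈ S ∧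
      (fun i => ((s i : ℤ) : ℝ)) - (fun i => ((v0 i : ℤ) : ℝ)) = (u : Fin n → ℝ) := by
    rintro ⟨u, hu⟩
    obtain ⟨w, ⟨s, hs, rfl⟩, hws⟩ := hbsub hu
    exact ⟨s, hs, hws⟩
  choose sel hselS hselval using hsel
  have hlow : ∀ k : ℕ, 1 ≤ k →
      (k / d + 1) ^ d ≤ {x : Fin n → ℤ | (fun i => (x i : ℝ)) ∈ (k : ℝ) • P}.ncard := by
    intro k hk
    have hk0 : 0 < k := hk
    set F : Finset (b → ℕ) := Fintype.piFinset (fun _ => Finset.range (k / d + 1)) with hFdef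
    set g : (b → ℕ) → (Fin n → ℤ) :=
      fun m => fun i => k * v0 i + ∑ u : b, (m u : ℤ) * (sel u i - v0 i) with hgdef
    have hgmem : ∀ m ∈ F, g m ∈ {x : Fin n → ℤ | (fun i => (x i : ℝ)) ∈ (k : ℝ) • P} := by
      intro m hm
      have hsum : ∑ u : b, m u ≤ k := by
        have : ∀ u : b, m u ≤ k / d := by
          intro u
          have := (Fintype.mem_piFinset.mp hm) u
          rw [Finset.mem_range] at this
          omega
        calc ∑ u : b, m u ≤ ∑ _u : b, k / d := Finset.sum_le_sum (fun u _ => this u)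
          _ = d * (k / d) := by
              rw [Finset.sum_const, smul_eq_mul, Finset.card_univ, hbcard]
          _ ≤ k := by rw [mul_comm]; exact Nat.div_mul_le_self k d
      have hkR : (0 : ℝ) < k := by exact_mod_cast hk0
      set t : b → ℝ := fun u => (m u : ℝ) / k with htdef
      set wght : Option b → ℝ := fun o => Option.rec (1 - ∑ u : b, t u) (fun u => t u) o with hwdef
      set z : Option b → (Fin n → ℝ) :=
        fun o => Option.rec (fun i => ((v0 i : ℤ) : ℝ)) (fun u => fun i => ((sel u i : ℤ) : ℝ)) o
        with hzdef
      have hts : ∑ u : b, t u = ((∑ u : b, m u : ℕ) : ℝ) / k := by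
        rw [htdef]
        push_cast
        rw [Finset.sum_div]
      have htsle : ∑ u : b, t u ≤ 1 := by
        rw [hts, div_le_one hkR]
        exact_mod_cast hsum
      have hzP : ∀ o : Option b, z o ∈ P := by
        rintro (_ | u)
        · exact hv0P
        · exact hP ▸ subset_convexHull ℝ _ ⟨sel u, hselS u, rfl⟩
      have hw0 : ∀ o ∈ (Finset.univ : Finset (Option b)), 0 ≤ wght o := by
        rintro (_ | u) -
        · simpa [hwdef] using htsle
        · simp only [hwdef, htdef]
          positivity
      have hw1 : ∑ o : Option b, wght o = 1 := by
        rw [Fintype.sum_option]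
        simp [hwdef]
      have hyP : ∑ o : Option b, wght o • z o ∈ P := by
        have hconv : Convex ℝ P := hP ▸ convex_convexHull ℝ _
        exact hconv.sum_mem hw0 hw1 (fun o _ => hzP o)
      have heq : (fun i => ((g m i : ℤ) : ℝ)) = (k : ℝ) • ∑ o : Option b, wght o • z o := by
        funext i
        rw [Pi.smul_apply, Finset.sum_apply, Fintype.sum_option]
        simp only [hwdef, hzdef, htdef, Pi.smul_apply, smul_eq_mul, hgdef]
        push_cast
        have e2 : ∀ u : b, (k : ℝ) * (((m u : ℝ) / k) * ((sel u i : ℤ) : ℝ))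
            = (m u : ℝ) * ((sel u i : ℤ) : ℝ) := fun u => by field_simp
        rw [mul_add, Finset.mul_sum, Finset.sum_congr rfl (fun u _ => e2 u)]
        have e3 : ∑ u : b, (m u : ℝ) * (((sel u i : ℤ) : ℝ) - ((v0 i : ℤ) : ℝ))
            = ∑ u : b, (m u : ℝ) * ((sel u i : ℤ) : ℝ)
              - (∑ u : b, (m u : ℝ)) * ((v0 i : ℤ) : ℝ) := by
          rw [Finset.sum_mul, ← Finset.sum_sub_distrib]
          exact Finset.sum_congr rfl (fun u _ => by ring)
        have e4 : ∑ u : b, (m u : ℝ) / k = (∑ u : b, (m u : ℝ)) / k := (Finset.sum_div _ _ _).symm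
        rw [e3, e4]
        field_simp
        ring
      rw [Set.mem_setOf_eq, heq]
      exact Set.smul_mem_smul_set hyP
    have hginj : Function.Injective g := by
      intro m m' hmm'
      have hveq : ∑ u : b, (((m u : ℝ)) - ((m' u : ℝ))) • (u : Fin n → ℝ) = 0 := by
        funext i
        rw [Finset.sum_apply, Pi.zero_apply]
        simp only [Pi.smul_apply, smul_eq_mul]
        have h3 : ∀ u : b, ((u : Fin n → ℝ) i) = ((sel u i : ℤ) : ℝ) - ((v0 i : ℤ) : ℝ) := by
          intro u
          have h4 := congrFun (hselval u) i
          simpa using h4.symm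
        have h1 := congrFun hmm' i
        simp only [hgdef] at h1
        have h2 := congrArg (fun z : ℤ => (z : ℝ)) h1
        push_cast at h2
        calc ∑ u : b, ((m u : ℝ) - (m' u : ℝ)) * ((u : Fin n → ℝ) i)
            = ∑ u : b, ((m u : ℝ) * (((sel u i : ℤ) : ℝ) - ((v0 i : ℤ) : ℝ))
                - (m' u : ℝ) * (((sel u i : ℤ) : ℝ) - ((v0 i : ℤ) : ℝ))) :=
              Finset.sum_congr rfl (fun u _ => by rw [h3 u]; ring)
          _ = ∑ u : b, (m u : ℝ) * (((sel u i : ℤ) : ℝ) - ((v0 i : ℤ) : ℝ))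
                - ∑ u : b, (m' u : ℝ) * (((sel u i : ℤ) : ℝ) - ((v0 i : ℤ) : ℝ)) :=
              Finset.sum_sub_distrib _ _
          _ = 0 := by linarith [h2]
      have hzero := Fintype.linearIndependent_iff.mp hbind
        (fun u => ((m u : ℝ) - (m' u : ℝ))) hveq
      funext u
      have h5 := hzero u
      have h6 : (m u : ℝ) = (m' u : ℝ) := by linarith
      exact_mod_cast h6
    have hFcard : F.card = (k / d + 1) ^ d := by
      rw [hFdef, Fintype.card_piFinset]
      simp [Finset.card_range, hbcard]
    calc (k / d + 1) ^ d = F.card := hFcard.symm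
      _ = (F.image g).card := (Finset.card_image_of_injective F hginj).symm
      _ = ((F.image g : Finset (Fin n → ℤ)) : Set (Fin n → ℤ)).ncard :=
          (Set.ncard_coe_finset _).symm
      _ ≤ {x : Fin n → ℤ | (fun i => (x i : ℝ)) ∈ (k : ℝ) • P}.ncard := by
          apply Set.ncard_le_ncard _ (hAfin k hk0)
          intro x hx
          obtain ⟨m, hm, rfl⟩ := Finset.mem_image.mp hx
          exact hgmem m hm
  -- conclude via the polynomial growth lemma
  have hdd : 0 < d ^ d := by
    cases d with
    | zero => simp
    | succ e => positivity
  refine aux_degree_eq p d (((d ^ d : ℕ) : ℚ))⁻¹ (((2 * R0 + 1) ^ d : ℕ) : ℚ) ?_ ?_ ?_ ?_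
  · rw [inv_pos]
    exact_mod_cast hdd
  · have : 0 < (2 * R0 + 1) ^ d := by positivity
    exact_mod_cast this
  · intro k hk
    rw [hp k hk]
    have hknat : k ^ d ≤ d ^ d * (k / d + 1) ^ d := by
      cases d with
      | zero => simp
      | succ e =>
          rw [← mul_pow]
          apply Nat.pow_le_pow_left
          have h1 := Nat.div_add_mod k (e + 1)
          have h2 : k % (e + 1) < e + 1 := Nat.mod_lt _ (by omega)
          have h3 : (e + 1) * (k / (e + 1) + 1)
              = (e + 1) * (k / (e + 1)) + (e + 1) := by ring
          rw [h3]
          omega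
    have hnat2 : k ^ d ≤ d ^ d * {x : Fin n → ℤ | (fun i => (x i : ℝ)) ∈ (k : ℝ) • P}.ncard :=
      hknat.trans (Nat.mul_le_mul_left _ (hlow k hk))
    have hq : ((k : ℚ)) ^ d ≤ (d ^ d : ℕ) *
        ({x : Fin n → ℤ | (fun i => (x i : ℝ)) ∈ (k : ℝ) • P}.ncard : ℚ) := by
      exact_mod_cast hnat2
    rw [inv_mul_le_iff₀ (by exact_mod_cast hdd)]
    calc ((k : ℚ)) ^ d ≤ (d ^ d : ℕ) *
          ({x : Fin n → ℤ | (fun i => (x i : ℝ)) ∈ (k : ℝ) • P}.ncard : ℚ) := hq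
      _ = ((d ^ d : ℕ) : ℚ) *
          ({x : Fin n → ℤ | (fun i => (x i : ℝ)) ∈ (k : ℝ) • P}.ncard : ℚ) := by norm_cast
  · intro k hk
    rw [hp k hk]
    have h1 := hup k hk
    have h2 : ({x : Fin n → ℤ | (fun i => (x i : ℝ)) ∈ (k : ℝ) • P}.ncard : ℚ)
        ≤ ((((2 * R0 + 1) * k) ^ d : ℕ) : ℚ) := by exact_mod_cast h1
    calc ({x : Fin n → ℤ | (fun i => (x i : ℝ)) ∈ (k : ℝ) • P}.ncard : ℚ)
        ≤ ((((2 * R0 + 1) * k) ^ d : ℕ) : ℚ) := h2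
      _ = (((2 * R0 + 1) ^ d : ℕ) : ℚ) * (k : ℚ) ^ d := by push_cast; rw [mul_pow]
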